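/- Let G be a finite group with trivial center Z(G) = 1 whose commutator subgroup [G,G] is isomorphic to C3 × C3. If G is not supersolvable, then d(G) ≤ 5/16. -/

import Mathlib

/-- A finite group is supersolvable if it has a chain of subgroups, each normal in the
whole group, from the trivial subgroup to the whole group, with cyclic successive quotients. -/
def IsSupersolvable (G : Type*) [Group G] : Prop :=
  ∃ (n : ℕ) (s : Fin (n + 1) → Subgroup G) (hnorm : ∀ i, (s i).Normal),
    s 0 = ⊥ ∧ s (Fin.last n) = ⊤ ∧ Monotone s ∧
    ∀ i : Fin n,
      IsCyclic ((s i.succ).map (@QuotientGroup.mk' G _ (s i.castSucc) (hnorm i.castSucc)))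

open scoped commutatorElement

theorem commutator_element_mem_commutator {G : Type*} [Group G] (g₁ g₂ : G) :
    ⁅g₁, g₂⁆ ∈ commutator G :=
  Subgroup.commutator_mem_commutator (Subgroup.mem_top g₁) (Subgroup.mem_top g₂)

/-- Two groups are isoclinic if there are compatible isomorphisms between their central
quotients and their commutator subgroups. -/
def Isoclinic (G H : Type*) [Group G] [Group H] : Prop :=
  ∃ (φ : G ⧸ Subgroup.center G ≃* H ⧸ Subgroup.center H)
    (ψ : commutator G ≃* commutator H),
    ∀ (g₁ g₂ : G) (h₁ h₂ : H),
      φ (g₁ : G ⧸ Subgroup.center G) = (h₁ : H ⧸ Subgroup.center H) →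
      φ (g₂ : G ⧸ Subgroup.center G) = (h₂ : H ⧸ Subgroup.center H) →
      (ψ ⟨⁅g₁, g₂⁆, commutator_element_mem_commutator g₁ g₂⟩ : H) = ⁅h₁, h₂⁆

section Auxiliary

variable {G : Type*} [Group G]

private lemma aux_normal_of_commutator_le {H : Subgroup G} (h : commutator G ≤ H) :
    H.Normal := by
  constructor
  intro a ha g
  have h1 : g * a * g⁻¹ = a * ⁅a⁻¹, g⁆ := by group
  rw [h1]
  exact H.mul_mem ha (h (commutator_element_mem_commutator a⁻¹ g))

private lemma aux_isCyclic_zpowers (a : G) : IsCyclic (Subgroup.zpowers a) := by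
  constructor
  refine ⟨⟨a, Subgroup.mem_zpowers a⟩, ?_⟩
  rintro ⟨y, hy⟩
  obtain ⟨n, rfl⟩ := hy
  exact ⟨n, by ext; simp⟩

private lemma aux_card_two_eq {Q : Type*} [Group Q] (h2 : Nat.card Q = 2) {a b : Q}
    (ha : a ≠ 1) (hb : b ≠ 1) : a = b := by
  by_contra hab
  have : Finite Q := Nat.finite_of_card_ne_zero (by omega)
  have : Fintype Q := Fintype.ofFinite Q
  have := Classical.decEq Q
  have h3 : ({1, a, b} : Finset Q).card = 3 := by
    rw [Finset.card_insert_of_notMem (by simp [ha.symm, hb.symm]),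
      Finset.card_insert_of_notMem (by simp [hab]), Finset.card_singleton]
  have h4 := Finset.card_le_univ ({1, a, b} : Finset Q)
  rw [h3] at h4
  rw [Nat.card_eq_fintype_card] at h2
  omega

private lemma aux_isSupersolvable_of_gen_chain (k : ℕ) (x : Fin k → G)
    (hnorm : ∀ i : Fin (k+1), (Subgroup.closure (x '' {j | (j : ℕ) < (i : ℕ)})).Normal)
    (htop : ∀ g : G, g ∈ Subgroup.closure (Set.range x)) :
    IsSupersolvable G := by
  refine ⟨k, fun i => Subgroup.closure (x '' {j | (j : ℕ) < (i : ℕ)}), hnorm, ?_, ?_, ?_, ?_⟩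
  · dsimp only
    have h0 : (x '' {j | (j : ℕ) < ((0 : Fin (k+1)) : ℕ)}) = ∅ := by
      simp
    rw [h0, Subgroup.closure_empty]
  · dsimp only
    have hend : (x '' {j | (j : ℕ) < ((Fin.last k : Fin (k+1)) : ℕ)}) = Set.range x := by
      ext g
      simp [Fin.is_lt]
    rw [hend]
    exact top_unique fun g _ => htop g
  · intro i i' hii'
    dsimp only
    exact Subgroup.closure_mono (Set.image_mono fun j hj =>
      show (j : ℕ) < (i' : ℕ) from lt_of_lt_of_le hj (Fin.le_def.mp hii'))
  · intro i
    dsimp only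
    have hset : x '' {j | (j : ℕ) < ((i.succ : Fin (k+1)) : ℕ)}
        = (x '' {j | (j : ℕ) < ((i.castSucc : Fin (k+1)) : ℕ)}) ∪ {x i} := by
      ext g
      simp only [Set.mem_image, Set.mem_union, Set.mem_singleton_iff, Fin.val_succ,
        Fin.coe_castSucc, Set.mem_setOf_eq]
      constructor
      · rintro ⟨j, hj, rfl⟩
        rcases Nat.lt_succ_iff_lt_or_eq.mp hj with h | h
        · exact Or.inl ⟨j, h, rfl⟩
        · exact Or.inr (by rw [Fin.ext h])
      · rintro (⟨j, hj, rfl⟩ | rfl)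
        · exact ⟨j, Nat.lt_succ_of_lt hj, rfl⟩
        · exact ⟨i, Nat.lt_succ_self _, rfl⟩
    haveI := hnorm i.castSucc
    beta_reduce
    rw [hset, Subgroup.closure_union, Subgroup.map_sup]
    have h1 : (Subgroup.closure (x '' {j | (j : ℕ) < ((i.castSucc : Fin (k+1)) : ℕ)})).map
        (QuotientGroup.mk'
          (Subgroup.closure (x '' {j | (j : ℕ) < ((i.castSucc : Fin (k+1)) : ℕ)}))) = ⊥ := by
      rw [Subgroup.map_eq_bot_iff, QuotientGroup.ker_mk']
    rw [h1, bot_sup_eq, MonoidHom.map_closure, Set.image_singleton,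
      ← Subgroup.zpowers_eq_closure]
    exact aux_isCyclic_zpowers _

private lemma aux_isSupersolvable_of_normal_line [Finite G]
    (h9 : Nat.card (commutator G) = 9)
    (L : Subgroup G) (hN : L.Normal) (hbot : L ≠ ⊥) (hlt : L < commutator G) :
    IsSupersolvable G := by
  classical
  have hdvd : Nat.card L ∣ Nat.card (commutator G) := Subgroup.card_dvd_of_le hlt.le
  rw [h9] at hdvd
  have hL1 : Nat.card L ≠ 1 := by
    intro h
    exact hbot (Subgroup.card_eq_one.mp h)
  have hL9 : Nat.card L ≠ 9 := fun h =>
    hlt.ne (Subgroup.eq_of_le_of_card_ge hlt.le (by rw [h, h9]))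
  have hpos : 0 < Nat.card L := Nat.card_pos
  have hdl : Nat.card L ≤ 9 := Nat.le_of_dvd (by norm_num) hdvd
  have hL3 : Nat.card L = 3 := by
    interval_cases h : (Nat.card ↥L) <;> simp_all <;> omega
  haveI : Fact (Nat.Prime 3) := ⟨by norm_num⟩
  haveI : IsCyclic ↥L := isCyclic_of_prime_card hL3
  obtain ⟨g, hg⟩ := IsCyclic.exists_generator (α := ↥L)
  have hclL : Subgroup.closure {(g : G)} = L := by
    apply le_antisymm
    · rw [Subgroup.closure_le]
      simp [g.2]
    · intro y hy
      obtain ⟨n, hn⟩ := Subgroup.mem_zpowers_iff.mp (hg ⟨y, hy⟩)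
      rw [← Subgroup.zpowers_eq_closure]
      exact ⟨n, by simpa using congrArg Subtype.val hn⟩
  obtain ⟨v, hvV, hvL⟩ := SetLike.exists_of_lt hlt
  have hgV : (g : G) ∈ commutator G := hlt.le g.2
  have hclV : Subgroup.closure {(g : G), v} = commutator G := by
    set C := Subgroup.closure {(g : G), v} with hC
    have hCle : C ≤ commutator G := by
      rw [hC, Subgroup.closure_le]
      rintro y (rfl | rfl) <;> simp_all
    have hLC : L ≤ C := by
      rw [← hclL]
      exact Subgroup.closure_mono (by simp)
    have hvC : v ∈ C := Subgroup.subset_closure (by simp)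
    have hd1 : Nat.card C ∣ 9 := h9 ▸ Subgroup.card_dvd_of_le hCle
    have hd2 : 3 ∣ Nat.card C := hL3 ▸ Subgroup.card_dvd_of_le hLC
    have hC3 : Nat.card C ≠ 3 := by
      intro h
      exact hvL (Subgroup.eq_of_le_of_card_ge hLC (by rw [h, hL3]) ▸ hvC)
    have hCpos : 0 < Nat.card C := Nat.card_pos
    have hCle9 : Nat.card C ≤ 9 := Nat.le_of_dvd (by norm_num) hd1
    have hC9 : Nat.card C = 9 := by
      interval_cases h : (Nat.card ↥C) <;> simp_all <;> omega
    exact Subgroup.eq_of_le_of_card_ge hCle (by rw [hC9, h9])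
  -- now build the chain
  have : Fintype G := Fintype.ofFinite G
  set N := Fintype.card G with hN'
  set e : G ≃ Fin N := Fintype.equivFin G with he
  set l : G := (g : G) with hl
  set xs : Fin (N + 2) → G := Fin.cons l (Fin.cons v fun j => e.symm j) with hxs
  have hxs0 : xs 0 = l := rfl
  have hxs1 : xs (Fin.succ 0) = v := by
    rw [hxs, Fin.cons_succ, Fin.cons_zero]
  apply aux_isSupersolvable_of_gen_chain (N + 2) xs
  · intro i
    rcases Nat.lt_or_ge (i : ℕ) 1 with h0 | h1
    · have hempty : (xs '' {j | (j : ℕ) < (i : ℕ)}) = ∅ := by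
        ext y
        simp only [Set.mem_image, Set.mem_setOf_eq, Set.mem_empty_iff_false, iff_false]
        rintro ⟨j, hj, rfl⟩
        omega
      rw [hempty, Subgroup.closure_empty]
      infer_instance
    rcases Nat.lt_or_ge (i : ℕ) 2 with h0 | h2
    · have hone : (xs '' {j | (j : ℕ) < (i : ℕ)}) = {l} := by
        ext y
        simp only [Set.mem_image, Set.mem_setOf_eq, Set.mem_singleton_iff]
        constructor
        · rintro ⟨j, hj, rfl⟩
          have : j = 0 := by
            apply Fin.ext
            simp only [Fin.val_zero]
            omega
          rw [this, hxs0]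
        · rintro rfl
          exact ⟨0, by simp only [Set.mem_setOf_eq, Fin.val_zero]; omega, hxs0⟩
      rw [hone, hclL]
      exact hN
    rcases Nat.lt_or_ge (i : ℕ) 3 with h0 | h3
    · have htwo : (xs '' {j | (j : ℕ) < (i : ℕ)}) = {l, v} := by
        ext y
        simp only [Set.mem_image, Set.mem_setOf_eq, Set.mem_insert_iff,
          Set.mem_singleton_iff]
        constructor
        · rintro ⟨j, hj, rfl⟩
          rcases Nat.lt_or_ge (j : ℕ) 1 with hj0 | hj1
          · left
            have : j = 0 := by apply Fin.ext; simp only [Fin.val_zero]; omega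
            rw [this, hxs0]
          · right
            have : j = Fin.succ 0 := by
              apply Fin.ext
              simp only [Fin.val_succ, Fin.val_zero]
              omega
            rw [this, hxs1]
        · rintro (rfl | rfl)
          · exact ⟨0, by simp only [Set.mem_setOf_eq, Fin.val_zero]; omega, hxs0⟩
          · exact ⟨Fin.succ 0,
              by simp only [Set.mem_setOf_eq, Fin.val_succ, Fin.val_zero]; omega, hxs1⟩
      rw [htwo, hclV]
      infer_instance
    · apply aux_normal_of_commutator_le
      rw [← hclV, Subgroup.closure_le]
      rintro y (rfl | rfl)
      · exact Subgroup.subset_closure ⟨0,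
          by simp only [Set.mem_setOf_eq, Fin.val_zero]; omega, hxs0⟩
      · exact Subgroup.subset_closure ⟨Fin.succ 0,
          by simp only [Set.mem_setOf_eq, Fin.val_succ, Fin.val_zero]; omega, hxs1⟩
  · intro gg
    apply Subgroup.subset_closure
    exact ⟨(e gg).succ.succ, by rw [hxs, Fin.cons_succ, Fin.cons_succ]; simp⟩

end Auxiliary

theorem commProb_le_of_commutator_C3xC3
    (G : Type*) [Group G] [Finite G]
    (hZ : Subgroup.center G = ⊥)
    (hcomm : Nonempty
      ((commutator G) ≃* (Multiplicative (ZMod 3) × Multiplicative (ZMod 3))))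
    (hss : ¬ IsSupersolvable G) :
    commProb G ≤ 5 / 16 := by
  classical
  obtain ⟨e⟩ := hcomm
  set K : Subgroup G := Subgroup.centralizer (commutator G : Set G) with hK
  -- basic facts about the commutator subgroup
  have hV9 : Nat.card (commutator G) = 9 := by
    rw [Nat.card_congr e.toEquiv]
    simp [Nat.card_eq_fintype_card]
  have hVexp : ∀ w ∈ commutator G, w ^ 3 = 1 := by
    intro w hw
    have h1 : ∀ y : Multiplicative (ZMod 3) × Multiplicative (ZMod 3), y ^ 3 = 1 := by decide
    have h2 : (⟨w, hw⟩ : commutator G) ^ 3 = 1 :=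
      e.injective (by rw [map_pow, map_one]; exact h1 _)
    have h3 := congrArg Subtype.val h2
    simpa using h3
  have hVab : ∀ u ∈ commutator G, ∀ w ∈ commutator G, u * w = w * u := by
    intro u hu w hw
    have : (⟨u, hu⟩ : commutator G) * ⟨w, hw⟩ = ⟨w, hw⟩ * ⟨u, hu⟩ :=
      e.injective (by rw [map_mul, map_mul, mul_comm])
    simpa [Subtype.ext_iff] using this
  have hVK : commutator G ≤ K := by
    intro u hu
    exact Subgroup.mem_centralizer_iff.mpr fun h hh => hVab h hh u hu
  -- conjugation by elements of K fixes the commutator subgroup pointwise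
  have hKconj : ∀ c ∈ K, ∀ a ∈ commutator G, c * a * c⁻¹ = a := by
    intro c hc a ha
    rw [mul_inv_eq_iff_eq_mul]
    exact (hc a ha).symm
  haveI hKn : K.Normal := by
    constructor
    intro a ha g
    rw [Subgroup.mem_centralizer_iff]
    intro h hh
    have h1 : g⁻¹ * h * g ∈ commutator G := by
      have := Subgroup.Normal.conj_mem (inferInstance : (commutator G).Normal) h hh g⁻¹
      simpa using this
    have h2 := ha _ h1
    have key : h * (g * a * g⁻¹) = g * ((g⁻¹ * h * g) * a) * g⁻¹ := by group
    rw [key, h2]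
    group
  -- fixed points of conjugation by x ∉ K on the commutator subgroup are trivial
  have hfpf : ∀ x, x ∉ K → ∀ w ∈ commutator G, x * w = w * x → w = 1 := by
    intro x hx w hw hcw
    set F : Subgroup G := commutator G ⊓ Subgroup.centralizer {x} with hF
    have hFn : F.Normal := by
      constructor
      intro a ha g
      rw [hF, Subgroup.mem_inf] at ha
      obtain ⟨haV, hax⟩ := ha
      have hax' : a * x = x * a := Subgroup.mem_centralizer_singleton_iff.mp hax
      rw [hF, Subgroup.mem_inf]
      refine ⟨Subgroup.Normal.conj_mem (inferInstance : (commutator G).Normal) a haV g, ?_⟩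
      rw [Subgroup.mem_centralizer_singleton_iff]
      have hc : g⁻¹ * x * g = x * ⁅x⁻¹, g⁻¹⁆ := by group
      have hcV : ⁅x⁻¹, g⁻¹⁆ ∈ commutator G := commutator_element_mem_commutator _ _
      have hac : a * ⁅x⁻¹, g⁻¹⁆ = ⁅x⁻¹, g⁻¹⁆ * a := hVab _ haV _ hcV
      have h3 : a * (g⁻¹ * x * g) = (g⁻¹ * x * g) * a := by
        rw [hc, ← mul_assoc, hax', mul_assoc, hac, ← mul_assoc]
      have key : (g * a * g⁻¹) * x = g * (a * (g⁻¹ * x * g)) * g⁻¹ := by group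
      rw [key, h3]
      group
    by_cases hFbot : F = ⊥
    · have : w ∈ F := ⟨hw, Subgroup.mem_centralizer_singleton_iff.mpr hcw.symm⟩
      rw [hFbot] at this
      exact this
    · exfalso
      apply hss
      refine aux_isSupersolvable_of_normal_line hV9 F hFn hFbot (lt_of_le_of_ne inf_le_left ?_)
      intro h
      apply hx
      rw [Subgroup.mem_centralizer_iff]
      intro u hu
      have : u ∈ F := h ▸ hu
      exact Subgroup.mem_centralizer_singleton_iff.mp this.2
  have comm_of_conj : ∀ a b : G, a * b * a⁻¹ = b → a * b = b * a := by
    intro a b h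
    calc a * b = (a * b * a⁻¹) * a := by group
      _ = b * a := by rw [h]
  -- the index of K is at least 4
  have hne0 : K.index ≠ 0 := Subgroup.index_ne_zero_of_finite
  have hKne_top : K ≠ ⊤ := by
    intro h
    have : commutator G = ⊥ := by
      rw [eq_bot_iff]
      intro w hw
      rw [Subgroup.mem_bot]
      have hwZ : w ∈ Subgroup.center G := by
        rw [Subgroup.mem_center_iff]
        intro g
        have hgK : g ∈ K := h ▸ Subgroup.mem_top g
        exact (hgK w hw).symm
      rw [hZ] at hwZ
      exact hwZ
    rw [this] at hV9
    simp at hV9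
  have hne1 : K.index ≠ 1 := fun h => hKne_top (Subgroup.index_eq_one.mp h)
  obtain ⟨x, hx⟩ : ∃ x, x ∉ K := by
    by_contra h
    push_neg at h
    exact hKne_top ((Subgroup.eq_top_iff' K).mpr h)
  have hxpow : x ^ K.index ∈ K := Subgroup.pow_index_mem K x
  have hVnontriv : ∃ w ∈ commutator G, w ≠ 1 := by
    by_contra h
    push_neg at h
    have : commutator G = ⊥ := by
      rw [eq_bot_iff]
      intro w hw
      rw [Subgroup.mem_bot]
      exact h w hw
    rw [this] at hV9
    simp at hV9
  have hne2 : K.index ≠ 2 := by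
    intro h2
    rw [h2] at hxpow
    have hx2 : x * x ∈ K := by rwa [pow_two] at hxpow
    -- conjugation by x inverts the commutator subgroup
    have hinv : ∀ w ∈ commutator G, x * w * x⁻¹ = w⁻¹ := by
      intro w hw
      have hw2 : x * w * x⁻¹ ∈ commutator G :=
        Subgroup.Normal.conj_mem (inferInstance : (commutator G).Normal) w hw x
      have hu : (x * w * x⁻¹) * w ∈ commutator G := mul_mem hw2 hw
      have e1 : w * (x * x) = (x * x) * w := hx2 w hw
      have hxu : x * ((x * w * x⁻¹) * w) = ((x * w * x⁻¹) * w) * x := by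
        apply comm_of_conj
        have step1 : x * ((x * w * x⁻¹) * w) * x⁻¹
            = ((x * x) * w * (x * x)⁻¹) * (x * w * x⁻¹) := by group
        have step2 : ((x * x) * w * (x * x)⁻¹) * (x * w * x⁻¹) = w * (x * w * x⁻¹) := by
          rw [← e1]
          group
        have step3 : w * (x * w * x⁻¹) = (x * w * x⁻¹) * w := hVab _ hw _ hw2
        rw [step1, step2, step3]
      have h1 : (x * w * x⁻¹) * w = 1 := hfpf x hx _ hu hxu
      exact eq_inv_of_mul_eq_one_left h1
    obtain ⟨v₀, hv₀V, hv₀⟩ := hVnontriv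
    set L : Subgroup G := Subgroup.zpowers v₀ with hL
    have hLV : L ≤ commutator G := Subgroup.zpowers_le.mpr hv₀V
    have hLbot : L ≠ ⊥ := by
      intro hbot
      exact hv₀ (Subgroup.zpowers_eq_bot.mp (hL ▸ hbot))
    have horder : orderOf v₀ = 3 := by
      have h3 : v₀ ^ 3 = 1 := hVexp v₀ hv₀V
      have hdvd := orderOf_dvd_of_pow_eq_one h3
      rcases (Nat.prime_three.eq_one_or_self_of_dvd _ hdvd) with h | h
      · exact absurd (orderOf_eq_one_iff.mp h) hv₀
      · exact h
    have hLcard : Nat.card L = 3 := by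
      rw [hL, Nat.card_zpowers, horder]
    have hLlt : L < commutator G := lt_of_le_of_ne hLV (by
      intro h
      rw [h] at hLcard
      omega)
    have hLnorm : L.Normal := by
      constructor
      intro a ha g
      obtain ⟨k, hk⟩ := Subgroup.mem_zpowers_iff.mp ha
      subst hk
      have hvk : v₀ ^ k ∈ commutator G := zpow_mem hv₀V k
      by_cases hgK : g ∈ K
      · rw [hKconj g hgK _ hvk]
        exact ha
      · have hgx : (g : G ⧸ K) = (x : G ⧸ K) := by
          apply aux_card_two_eq
          · rw [← Subgroup.index, h2]
          · simpa [QuotientGroup.eq_one_iff] using hgK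
          · simpa [QuotientGroup.eq_one_iff] using hx
        have hcK : x⁻¹ * g ∈ K := by
          have := QuotientGroup.eq.mp hgx.symm
          exact this
        have hconj1 : (x⁻¹ * g) * v₀ ^ k * (x⁻¹ * g)⁻¹ = v₀ ^ k := hKconj _ hcK _ hvk
        have hfin : g * v₀ ^ k * g⁻¹ = x * v₀ ^ k * x⁻¹ := by
          calc g * v₀ ^ k * g⁻¹
              = x * ((x⁻¹ * g) * v₀ ^ k * (x⁻¹ * g)⁻¹) * x⁻¹ := by group
            _ = x * v₀ ^ k * x⁻¹ := by rw [hconj1]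
        rw [hfin]
        have hcz : x * v₀ ^ k * x⁻¹ = (x * v₀ * x⁻¹) ^ k := by rw [conj_zpow]
        rw [hcz, hinv v₀ hv₀V]
        exact Subgroup.zpow_mem _ (Subgroup.mem_zpowers_iff.mpr ⟨-1, by group⟩) k
    exact hss (aux_isSupersolvable_of_normal_line hV9 L hLnorm hLbot hLlt)
  have hne3 : K.index ≠ 3 := by
    intro h3
    rw [h3] at hxpow
    have hx3 : x * x * x ∈ K := by
      have h33 : x ^ 3 = x * x * x := by rw [pow_succ, pow_two]
      rwa [h33] at hxpow
    -- the product of the three conjugates is trivial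
    have hprod : ∀ w ∈ commutator G,
        w * (x * w * x⁻¹) * ((x * x) * w * (x * x)⁻¹) = 1 := by
      intro w hw
      have hw1 : x * w * x⁻¹ ∈ commutator G :=
        Subgroup.Normal.conj_mem (inferInstance : (commutator G).Normal) w hw x
      have hw2 : (x * x) * w * (x * x)⁻¹ ∈ commutator G :=
        Subgroup.Normal.conj_mem (inferInstance : (commutator G).Normal) w hw (x * x)
      have hu : w * (x * w * x⁻¹) * ((x * x) * w * (x * x)⁻¹) ∈ commutator G :=
        mul_mem (mul_mem hw hw1) hw2
      have e1 : w * (x * x * x) = (x * x * x) * w := hx3 w hw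
      have hxu : x * (w * (x * w * x⁻¹) * ((x * x) * w * (x * x)⁻¹))
          = (w * (x * w * x⁻¹) * ((x * x) * w * (x * x)⁻¹)) * x := by
        apply comm_of_conj
        have step1 : x * (w * (x * w * x⁻¹) * ((x * x) * w * (x * x)⁻¹)) * x⁻¹
            = (x * w * x⁻¹) * ((x * x) * w * (x * x)⁻¹) * ((x * x * x) * w * (x * x * x)⁻¹) := by
          group
        have step2 : (x * x * x) * w * (x * x * x)⁻¹ = w := by
          rw [← e1]
          group
        rw [step1, step2]
        have c1 : w * ((x * w * x⁻¹) * ((x * x) * w * (x * x)⁻¹))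
            = ((x * w * x⁻¹) * ((x * x) * w * (x * x)⁻¹)) * w :=
          hVab _ hw _ (mul_mem hw1 hw2)
        rw [← c1, ← mul_assoc]
      exact hfpf x hx _ hu hxu
    -- the map u ↦ u⁻¹ * (x * u * x⁻¹) is a bijection of the commutator subgroup
    have hmem : ∀ u : commutator G, (u : G)⁻¹ * (x * u * x⁻¹) ∈ commutator G := by
      intro u
      exact mul_mem (inv_mem u.2)
        (Subgroup.Normal.conj_mem (inferInstance : (commutator G).Normal) u u.2 x)
    set σ : commutator G → commutator G := fun u => ⟨(u : G)⁻¹ * (x * u * x⁻¹), hmem u⟩ with hσ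
    have hinj : Function.Injective σ := by
      intro u t h
      have h' : (u : G)⁻¹ * (x * u * x⁻¹) = (t : G)⁻¹ * (x * t * x⁻¹) :=
        congrArg Subtype.val h
      have h'' : x * ((t : G) * (u : G)⁻¹) * x⁻¹ = (t : G) * (u : G)⁻¹ := by
        have hxu2 : x * (u : G) * x⁻¹ = (u : G) * ((t : G)⁻¹ * (x * t * x⁻¹)) := by
          rw [← h']
          group
        calc x * ((t : G) * (u : G)⁻¹) * x⁻¹
            = (x * t * x⁻¹) * (x * (u : G) * x⁻¹)⁻¹ := by group
          _ = (x * t * x⁻¹) * ((u : G) * ((t : G)⁻¹ * (x * t * x⁻¹)))⁻¹ := by rw [hxu2]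
          _ = (t : G) * (u : G)⁻¹ := by group
      have htu : (t : G) * (u : G)⁻¹ ∈ commutator G := mul_mem t.2 (inv_mem u.2)
      have h1 : (t : G) * (u : G)⁻¹ = 1 := hfpf x hx _ htu (comm_of_conj _ _ h'')
      have h2 : (t : G) = (u : G) := by
        rw [← mul_inv_eq_one]
        exact h1
      exact (Subtype.ext h2).symm
    have hsurj : Function.Surjective σ := Finite.surjective_of_injective hinj
    obtain ⟨g₀, hg₀V, hg₀⟩ := hVnontriv
    obtain ⟨t, ht⟩ := hsurj ⟨g₀, hg₀V⟩
    have ht' : (t : G)⁻¹ * (x * t * x⁻¹) = g₀ := congrArg Subtype.val ht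
    have hphit : x * (t : G) * x⁻¹ = (t : G) * g₀ := by
      rw [← ht']
      group
    have htV : (t : G) ∈ commutator G := t.2
    have hcV : x * g₀ * x⁻¹ ∈ commutator G :=
      Subgroup.Normal.conj_mem (inferInstance : (commutator G).Normal) g₀ hg₀V x
    have hphi2t : (x * x) * (t : G) * (x * x)⁻¹ = (t : G) * g₀ * (x * g₀ * x⁻¹) := by
      have ha1 : (x * x) * (t : G) * (x * x)⁻¹ = x * (x * (t : G) * x⁻¹) * x⁻¹ := by group
      rw [ha1, hphit]
      have ha2 : x * ((t : G) * g₀) * x⁻¹ = (x * (t : G) * x⁻¹) * (x * g₀ * x⁻¹) := by group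
      rw [ha2, hphit]
    have hp := hprod (t : G) htV
    rw [hphit, hphi2t] at hp
    -- rearrange: t^3 * g₀^2 * (x * g₀ * x⁻¹) = 1
    have hba : g₀ * (t : G) = (t : G) * g₀ := hVab _ hg₀V _ htV
    have hkey : (t : G) * ((t : G) * g₀) * ((t : G) * g₀ * (x * g₀ * x⁻¹))
        = ((t : G) * (t : G) * (t : G)) * (g₀ * g₀) * (x * g₀ * x⁻¹) := by
      rw [show (t : G) * ((t : G) * g₀) * ((t : G) * g₀ * (x * g₀ * x⁻¹))
          = (t : G) * (t : G) * (g₀ * (t : G)) * (g₀ * (x * g₀ * x⁻¹)) from by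
        simp [mul_assoc], hba]
      simp [mul_assoc]
    rw [hkey] at hp
    have ht3 : (t : G) * (t : G) * (t : G) = 1 := by
      have h := hVexp (t : G) htV
      calc (t : G) * (t : G) * (t : G) = (t : G) ^ 3 := by rw [pow_succ, pow_two]
        _ = 1 := h
    have hg3 : g₀ * g₀ * g₀ = 1 := by
      have h := hVexp g₀ hg₀V
      calc g₀ * g₀ * g₀ = g₀ ^ 3 := by rw [pow_succ, pow_two]
        _ = 1 := h
    rw [ht3, one_mul] at hp
    -- so x * g₀ * x⁻¹ = g₀
    have hcg : x * g₀ * x⁻¹ = g₀ := by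
      have h1 : x * g₀ * x⁻¹ = (g₀ * g₀)⁻¹ := eq_inv_of_mul_eq_one_right hp
      rw [h1, show (g₀ * g₀)⁻¹ = g₀ * (g₀ * g₀ * g₀)⁻¹ from by group, hg3]
      group
    exact hg₀ (hfpf x hx g₀ hg₀V (comm_of_conj _ _ hcg))
  have hidx4 : 4 ≤ K.index := by omega
  -- counting
  have : Fintype G := Fintype.ofFinite G
  set n := Nat.card G with hn
  set m := Nat.card K with hm
  have hnm : m * K.index = n := Subgroup.card_mul_index K
  have hm9 : 9 ≤ m := hV9 ▸ Subgroup.card_le_of_le hVK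
  have hn4m : 4 * m ≤ n := by
    calc 4 * m ≤ K.index * m := Nat.mul_le_mul_right m hidx4
    _ = n := by rw [mul_comm]; exact hnm
  -- centralizer bounds
  have hC1 : ∀ y : G, Nat.card (Subgroup.centralizer {y}) ≤ n :=
    fun y => Nat.card_le_card_of_injective _ Subtype.val_injective
  have hC2 : ∀ y : G, y ≠ 1 → 2 * Nat.card (Subgroup.centralizer {y}) ≤ n := by
    intro y hy
    have hne : Subgroup.centralizer {y} ≠ ⊤ := by
      intro h
      apply hy
      have : y ∈ Subgroup.center G := by
        rw [Subgroup.mem_center_iff]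
        intro g
        exact Subgroup.mem_centralizer_singleton_iff.mp (h ▸ Subgroup.mem_top g)
      rw [hZ] at this
      exact this
    obtain ⟨g₀, hg₀⟩ : ∃ g₀, g₀ ∉ Subgroup.centralizer {y} := by
      by_contra h
      push_neg at h
      exact hne ((Subgroup.eq_top_iff' (Subgroup.centralizer {y})).mpr h)
    have hinj : Function.Injective
        (fun p : Bool × (Subgroup.centralizer {y} : Subgroup G) =>
          if p.1 then g₀ * (p.2 : G) else (p.2 : G)) := by
      rintro ⟨b1, c1⟩ ⟨b2, c2⟩ h
      simp only at h
      cases b1 <;> cases b2 <;> simp only [if_true, if_false, Bool.false_eq_true] at h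
      · simp [Subtype.ext (h)]
      · exfalso
        apply hg₀
        have hg : g₀ = (c1 : G) * (c2 : G)⁻¹ := by rw [h]; group
        rw [hg]
        exact mul_mem c1.2 (inv_mem c2.2)
      · exfalso
        apply hg₀
        have hg : g₀ = (c2 : G) * (c1 : G)⁻¹ := by rw [← h]; group
        rw [hg]
        exact mul_mem c2.2 (inv_mem c1.2)
      · simp [Subtype.ext (mul_left_cancel h)]
    have := Nat.card_le_card_of_injective _ hinj
    rwa [Nat.card_prod, Nat.card_eq_fintype_card (α := Bool), Fintype.card_bool] at this
  have hC9 : ∀ y : G, y ∉ K → 9 * Nat.card (Subgroup.centralizer {y}) ≤ n := by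
    intro y hy
    have hinj : Function.Injective
        (fun p : ↥(commutator G) × ↥(Subgroup.centralizer ({y} : Set G)) =>
          (p.1 : G) * (p.2 : G)) := by
      rintro ⟨v1, c1⟩ ⟨v2, c2⟩ h
      simp only at h
      have hw : (v2 : G)⁻¹ * (v1 : G) = (c2 : G) * (c1 : G)⁻¹ := by
        calc (v2 : G)⁻¹ * (v1 : G)
            = (v2 : G)⁻¹ * ((v1 : G) * (c1 : G)) * (c1 : G)⁻¹ := by group
          _ = (v2 : G)⁻¹ * ((v2 : G) * (c2 : G)) * (c1 : G)⁻¹ := by rw [h]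
          _ = (c2 : G) * (c1 : G)⁻¹ := by group
      have hwV : (v2 : G)⁻¹ * (v1 : G) ∈ commutator G := mul_mem (inv_mem v2.2) v1.2
      have hwC : (v2 : G)⁻¹ * (v1 : G) ∈ Subgroup.centralizer {y} := by
        rw [hw]
        exact mul_mem c2.2 (inv_mem c1.2)
      have hcomm' : y * ((v2 : G)⁻¹ * (v1 : G)) = ((v2 : G)⁻¹ * (v1 : G)) * y :=
        (Subgroup.mem_centralizer_singleton_iff.mp hwC).symm
      have h1 : (v2 : G)⁻¹ * (v1 : G) = 1 := hfpf y hy _ hwV hcomm'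
      have hv : v1 = v2 := Subtype.ext (inv_mul_eq_one.mp h1).symm
      have hc : c1 = c2 := by
        apply Subtype.ext
        apply mul_left_cancel (a := (v1 : G))
        rw [h, hv]
      rw [hv, hc]
    have := Nat.card_le_card_of_injective _ hinj
    rwa [Nat.card_prod, hV9] at this
  -- the number of commuting pairs equals the sum of centralizer orders
  have hS : Nat.card { p : G × G // Commute p.1 p.2 }
      = ∑ y : G, Nat.card (Subgroup.centralizer {y}) := by
    have e2 : { p : G × G // Commute p.1 p.2 }
        ≃ Σ y : G, (Subgroup.centralizer {y} : Subgroup G) :=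
      { toFun := fun p => ⟨p.1.1, ⟨p.1.2, Subgroup.mem_centralizer_singleton_iff.mpr p.2.symm⟩⟩
        invFun := fun q => ⟨(q.1, (q.2 : G)),
          (Subgroup.mem_centralizer_singleton_iff.mp q.2.2).symm⟩
        left_inv := fun p => rfl
        right_inv := fun q => rfl }
    rw [Nat.card_congr e2, Nat.card_eq_fintype_card, Fintype.card_sigma]
    exact Finset.sum_congr rfl fun y _ => (Nat.card_eq_fintype_card).symm
  set S := ∑ y : G, Nat.card (Subgroup.centralizer {y}) with hSdef
  -- bound the sum
  have hbound : 18 * S ≤ 2 * n * n + 7 * n * m + 9 * n := by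
    have hperelt : ∀ y : G, 18 * Nat.card (Subgroup.centralizer {y})
        ≤ 2 * n + (if y ∈ K then 7 * n else 0) + (if y = 1 then 9 * n else 0) := by
      intro y
      by_cases hy1 : y = 1
      · have := hC1 y
        rw [if_pos hy1, if_pos (show y ∈ K from hy1 ▸ Subgroup.one_mem K)]
        omega
      · by_cases hyK : y ∈ K
        · have := hC2 y hy1
          simp only [if_pos hyK, if_neg hy1]
          omega
        · have := hC9 y hyK
          simp only [if_neg hyK, if_neg hy1]
          omega
    calc 18 * S = ∑ y : G, 18 * Nat.card (Subgroup.centralizer {y}) := by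
          rw [hSdef, Finset.mul_sum]
      _ ≤ ∑ y : G, (2 * n + (if y ∈ K then 7 * n else 0) + (if y = 1 then 9 * n else 0)) :=
          Finset.sum_le_sum fun y _ => hperelt y
      _ = 2 * n * n + 7 * n * m + 9 * n := by
          rw [Finset.sum_add_distrib, Finset.sum_add_distrib]
          congr 1
          · congr 1
            · rw [Finset.sum_const, Finset.card_univ, smul_eq_mul, ← Nat.card_eq_fintype_card,
                ← hn]
              ring
            · rw [← Finset.sum_filter, Finset.sum_const, smul_eq_mul]
              have hcardK : (Finset.univ.filter (fun y => y ∈ K)).card = m := by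
                rw [hm, Nat.card_eq_fintype_card, Fintype.card_subtype]
              rw [hcardK]
              ring
          · rw [Finset.sum_ite_eq' Finset.univ (1 : G) (fun _ => 9 * n)]
            simp
  -- final arithmetic
  have hn36 : 36 ≤ n := by omega
  rw [commProb_def, hS, ← hn]
  have hnQ : (0:ℚ) < (n:ℚ) := by exact_mod_cast show 0 < n by omega
  rw [div_le_iff₀ (by positivity : (0:ℚ) < (n:ℚ) ^ 2)]
  have h1 : (18:ℚ) * (S:ℚ) ≤ 2*(n:ℚ)*(n:ℚ) + 7*(n:ℚ)*(m:ℚ) + 9*(n:ℚ) := by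
    exact_mod_cast hbound
  have h2 : (4:ℚ) * (m:ℚ) ≤ (n:ℚ) := by exact_mod_cast hn4m
  have h3 : (9:ℚ) ≤ (m:ℚ) := by exact_mod_cast hm9
  have h4 : (36:ℚ) ≤ (n:ℚ) := by exact_mod_cast hn36
  nlinarith [h1, h2, h3, h4, mul_nonneg (le_of_lt hnQ) (sub_nonneg.mpr h2),
    mul_nonneg (le_of_lt hnQ) (sub_nonneg.mpr h4)]
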